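/- arXiv:1706.01494 — 2 statements merged into one kernel-verified Lean document; each statement's English description precedes it below -/
import Mathlib

section
/- At the planar reference configuration with v2'(1)=0, v3'(2π/3)=0, the symmetric energy E(λ,α1,α2) = 2v2(λ) + (1/2)v2(3/2 + λcos α1) + (1/2)v2(3/2 + λcos α2) + 2v3(α1) + 2v3(α2) + v3(β(α1,π)) + v3(β(α2,π)) with β(α,γ)=2 arcsin(sin α sin(γ/2)) satisfies: the second derivative ∂²E/∂α1² at (1, 2π/3, 2π/3) equals (3/8)v2''(1) + 6v3''(2π/3). -/
open Real

noncomputable def β (α γ : ℝ) : ℝ := 2 * Real.arcsin (Real.sin α * Real.sin (γ / 2))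

noncomputable def Esym (v2 v3 : ℝ → ℝ) (lam α1 α2 : ℝ) : ℝ :=
  2 * v2 lam + (1 / 2) * v2 (3 / 2 + lam * Real.cos α1)
    + (1 / 2) * v2 (3 / 2 + lam * Real.cos α2)
    + 2 * v3 α1 + 2 * v3 α2 + v3 (β α1 π) + v3 (β α2 π)

theorem second_deriv_alpha1 (v2 v3 : ℝ → ℝ)
    (hv2 : ContDiff ℝ 2 v2) (hv3 : ContDiff ℝ 2 v3)
    (hv2' : deriv v2 1 = 0) (hv3' : deriv v3 (2 * π / 3) = 0) :
    deriv (deriv (fun α1 => Esym v2 v3 1 α1 (2 * π / 3))) (2 * π / 3)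
      = (3 / 8) * deriv (deriv v2) 1 + 6 * deriv (deriv v3) (2 * π / 3) := by
  have pi_pos := Real.pi_pos
  set p : ℝ := 2 * π / 3 with hp
  -- smoothness facts
  have h2 : (2 : WithTop ℕ∞) = 1 + 1 := by norm_num
  have hv2d : Differentiable ℝ v2 := hv2.differentiable (by norm_num)
  have hv3d : Differentiable ℝ v3 := hv3.differentiable (by norm_num)
  have hdv2 : ContDiff ℝ 1 (deriv v2) := (contDiff_succ_iff_deriv.mp (h2 ▸ hv2)).2.2
  have hdv3 : ContDiff ℝ 1 (deriv v3) := (contDiff_succ_iff_deriv.mp (h2 ▸ hv3)).2.2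
  have hdv2d : Differentiable ℝ (deriv v2) := hdv2.differentiable (by norm_num)
  have hdv3d : Differentiable ℝ (deriv v3) := hdv3.differentiable (by norm_num)
  -- the nice local form g
  set g : ℝ → ℝ := fun α => 2 * v2 1 + (1 / 2) * v2 (3 / 2 + Real.cos α)
      + (1 / 2) * v2 (3 / 2 + 1 * Real.cos p)
      + 2 * v3 α + 2 * v3 p + v3 (2 * π - 2 * α) + v3 (β p π) with hg
  have hpmem : p ∈ Set.Ioo (π / 2) (3 * π / 2) := by
    constructor <;> [skip; skip] <;> rw [hp] <;> linarith
  have hEqOn : Set.EqOn (fun α1 => Esym v2 v3 1 α1 p) g (Set.Ioo (π / 2) (3 * π / 2)) := by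
    intro α hα
    have hβ : β α π = 2 * π - 2 * α := by
      have hs : Real.sin (π / 2) = 1 := Real.sin_pi_div_two
      have harc : Real.arcsin (Real.sin α) = π - α := by
        rw [← Real.sin_pi_sub]
        exact Real.arcsin_sin (by linarith [hα.2]) (by linarith [hα.1])
      simp [β, hs, harc]
      ring
    simp only [Esym, hg, hβ, one_mul]
  have hfg : (fun α1 => Esym v2 v3 1 α1 p) =ᶠ[nhds p] g :=
    Filter.eventuallyEq_of_mem (isOpen_Ioo.mem_nhds hpmem) hEqOn
  rw [hfg.deriv.deriv_eq]
  -- first derivative of g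
  set g1 : ℝ → ℝ := fun α =>
      (1 / 2) * (deriv v2 (3 / 2 + Real.cos α) * (-Real.sin α))
      + 2 * deriv v3 α + deriv v3 (2 * π - 2 * α) * (-2) with hg1
  have hinner1 : ∀ α : ℝ, HasDerivAt (fun α => 3 / 2 + Real.cos α) (-Real.sin α) α := by
    intro α
    simpa using (Real.hasDerivAt_cos α).const_add (3 / 2 : ℝ)
  have hinner2 : ∀ α : ℝ, HasDerivAt (fun α : ℝ => 2 * π - 2 * α) (-2) α := by
    intro α
    simpa using ((hasDerivAt_id α).const_mul (2 : ℝ)).const_sub (2 * π)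
  have hgderiv : ∀ α : ℝ, HasDerivAt g (g1 α) α := by
    intro α
    have hA : HasDerivAt (fun α => v2 (3 / 2 + Real.cos α))
        (deriv v2 (3 / 2 + Real.cos α) * (-Real.sin α)) α :=
      (hv2d (3 / 2 + Real.cos α)).hasDerivAt.comp α (hinner1 α)
    have hB : HasDerivAt (fun α => v3 (2 * π - 2 * α))
        (deriv v3 (2 * π - 2 * α) * (-2)) α :=
      (hv3d (2 * π - 2 * α)).hasDerivAt.comp α (hinner2 α)
    have hC : HasDerivAt (fun α => 2 * v3 α) (2 * deriv v3 α) α :=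
      ((hv3d α).hasDerivAt).const_mul 2
    have := ((((((hasDerivAt_const α (2 * v2 1)).add (hA.const_mul (1 / 2))).add
        (hasDerivAt_const α ((1 / 2) * v2 (3 / 2 + 1 * Real.cos p)))).add hC).add
        (hasDerivAt_const α (2 * v3 p))).add hB).add (hasDerivAt_const α (v3 (β p π)))
    refine HasDerivAt.congr_deriv this ?_
    rw [hg1]; ring
  have hdg : deriv g = g1 := funext fun α => (hgderiv α).deriv
  rw [hdg]
  -- second derivative: derivative of g1 at p
  have hA2 : HasDerivAt (fun α => deriv v2 (3 / 2 + Real.cos α) * (-Real.sin α))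
      (deriv (deriv v2) (3 / 2 + Real.cos p) * (-Real.sin p) * (-Real.sin p)
        + deriv v2 (3 / 2 + Real.cos p) * (-Real.cos p)) p := by
    exact ((hdv2d (3 / 2 + Real.cos p)).hasDerivAt.comp p (hinner1 p)).mul
      (Real.hasDerivAt_sin p).neg
  have hB2 : HasDerivAt (fun α => deriv v3 (2 * π - 2 * α) * (-2))
      (deriv (deriv v3) (2 * π - 2 * p) * (-2) * (-2)) p := by
    simpa [mul_comm, mul_assoc] using
      (((hdv3d (2 * π - 2 * p)).hasDerivAt.comp p (hinner2 p)).const_mul (-2 : ℝ)).congr_deriv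
      (by ring)
  have hC2 : HasDerivAt (fun α => 2 * deriv v3 α) (2 * deriv (deriv v3) p) p :=
    ((hdv3d p).hasDerivAt).const_mul 2
  have hg1deriv : HasDerivAt g1
      ((1 / 2) * (deriv (deriv v2) (3 / 2 + Real.cos p) * (-Real.sin p) * (-Real.sin p)
        + deriv v2 (3 / 2 + Real.cos p) * (-Real.cos p))
       + 2 * deriv (deriv v3) p + deriv (deriv v3) (2 * π - 2 * p) * (-2) * (-2)) p :=
    ((hA2.const_mul (1 / 2)).add hC2).add hB2
  rw [hg1deriv.deriv]
  -- numeric evaluation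
  have hcos : Real.cos p = -(1 / 2) := by
    have : p = π - π / 3 := by rw [hp]; ring
    rw [this, Real.cos_pi_sub, Real.cos_pi_div_three]
  have hsin2 : Real.sin p * Real.sin p = 3 / 4 := by
    have hps : Real.sin p = Real.sqrt 3 / 2 := by
      have : p = π - π / 3 := by rw [hp]; ring
      rw [this, Real.sin_pi_sub, Real.sin_pi_div_three]
    rw [hps]
    rw [div_mul_div_comm, Real.mul_self_sqrt (by norm_num)]
    norm_num
  have harg : (3 : ℝ) / 2 + Real.cos p = 1 := by rw [hcos]; norm_num
  have harg2 : 2 * π - 2 * p = p := by rw [hp]; ring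
  rw [harg, harg2, hcos, hv2']
  linear_combination (1 / 2 * deriv (deriv v2) 1) * hsin2
end

section
/- At the planar reference configuration, the symmetric energy E(λ,α1,α2) = 2v2(λ) + (1/2)v2(3/2 + λcos α1) + (1/2)v2(3/2 + λcos α2) + 2v3(α1) + 2v3(α2) + v3(β(α1,π)) + v3(β(α2,π)) with v2'(1)=0 and v3'(2π/3)=0 satisfies: ∂²E/∂λ²(1,2π/3,2π/3) = (9/4)v2''(1) and ∂²E/∂λ∂α1(1,2π/3,2π/3) = (√3/8)v2''(1). -/
open Real

theorem second_derivs_lambda (v2 v3 : ℝ → ℝ)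
    (hv2 : ContDiff ℝ 2 v2) (hv3 : ContDiff ℝ 2 v3)
    (hv2' : deriv v2 1 = 0) (hv3' : deriv v3 (2 * π / 3) = 0) :
    deriv (deriv (fun lam => Esym v2 v3 lam (2 * π / 3) (2 * π / 3))) 1
        = (9 / 4) * deriv (deriv v2) 1 ∧
    deriv (fun α1 => deriv (fun lam => Esym v2 v3 lam α1 (2 * π / 3)) 1) (2 * π / 3)
        = Real.sqrt 3 / 8 * deriv (deriv v2) 1 := by
  have hv2d : Differentiable ℝ v2 := hv2.differentiable (by norm_num)
  have hw : ContDiff ℝ 1 (deriv v2) := by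
    have h2 : ContDiff ℝ ((1 : ℕ∞) + 1) v2 := by exact_mod_cast hv2
    exact (contDiff_succ_iff_deriv.mp h2).2.2
  have hwd : Differentiable ℝ (deriv v2) := hw.differentiable (by norm_num)
  have hc : Real.cos (2 * π / 3) = -(1 / 2) := by
    have h : (2 : ℝ) * π / 3 = π - π / 3 := by ring
    rw [h, Real.cos_pi_sub, Real.cos_pi_div_three]
  have hs : Real.sin (2 * π / 3) = Real.sqrt 3 / 2 := by
    have h : (2 : ℝ) * π / 3 = π - π / 3 := by ring
    rw [h, Real.sin_pi_sub, Real.sin_pi_div_three]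
  have harg : ∀ α : ℝ, (3 : ℝ) / 2 + 1 * Real.cos (2 * π / 3) = 1 := by
    intro _; rw [hc]; ring
  -- chain rule helper
  have hchain : ∀ (f : ℝ → ℝ), Differentiable ℝ f → ∀ (a b x : ℝ),
      HasDerivAt (fun l => f (a + l * b)) (deriv f (a + x * b) * b) x := by
    intro f hf a b x
    have h1 : HasDerivAt (fun l : ℝ => a + l * b) b x := by
      simpa using ((hasDerivAt_id x).mul_const b).const_add a
    exact ((hf (a + x * b)).hasDerivAt.comp x h1 : _)
  -- derivative in lam, for arbitrary α1
  have hD1 : ∀ (α1 lam : ℝ),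
      HasDerivAt (fun l => Esym v2 v3 l α1 (2 * π / 3))
        (2 * deriv v2 lam
          + 1 / 2 * (deriv v2 (3 / 2 + lam * Real.cos α1) * Real.cos α1)
          + 1 / 2 * (deriv v2 (3 / 2 + lam * Real.cos (2 * π / 3)) * Real.cos (2 * π / 3)))
        lam := by
    intro α1 lam
    have h := (((((((hv2d lam).hasDerivAt.const_mul 2).add
        ((hchain v2 hv2d (3 / 2) (Real.cos α1) lam).const_mul (1 / 2))).add
        ((hchain v2 hv2d (3 / 2) (Real.cos (2 * π / 3)) lam).const_mul (1 / 2))).add_const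
        (2 * v3 α1)).add_const (2 * v3 (2 * π / 3))).add_const
        (v3 (β α1 π))).add_const (v3 (β (2 * π / 3) π))
    simpa [Esym] using h
  have hderiv1 : ∀ (α1 : ℝ), deriv (fun l => Esym v2 v3 l α1 (2 * π / 3))
      = fun lam => 2 * deriv v2 lam
          + 1 / 2 * (deriv v2 (3 / 2 + lam * Real.cos α1) * Real.cos α1)
          + 1 / 2 * (deriv v2 (3 / 2 + lam * Real.cos (2 * π / 3)) * Real.cos (2 * π / 3)) := by
    intro α1; funext lam; exact (hD1 α1 lam).deriv
  constructor
  · -- second derivative in lam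
    rw [hderiv1 (2 * π / 3)]
    have h : HasDerivAt (fun lam : ℝ => 2 * deriv v2 lam
          + 1 / 2 * (deriv v2 (3 / 2 + lam * Real.cos (2 * π / 3)) * Real.cos (2 * π / 3))
          + 1 / 2 * (deriv v2 (3 / 2 + lam * Real.cos (2 * π / 3)) * Real.cos (2 * π / 3)))
        (2 * deriv (deriv v2) 1
          + 1 / 2 * ((deriv (deriv v2) (3 / 2 + 1 * Real.cos (2 * π / 3)) * Real.cos (2 * π / 3)) * Real.cos (2 * π / 3))
          + 1 / 2 * ((deriv (deriv v2) (3 / 2 + 1 * Real.cos (2 * π / 3)) * Real.cos (2 * π / 3)) * Real.cos (2 * π / 3)))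
        1 := by
      exact (((hwd 1).hasDerivAt.const_mul 2).add
        (((hchain (deriv v2) hwd (3 / 2) (Real.cos (2 * π / 3)) 1).mul_const
          (Real.cos (2 * π / 3))).const_mul (1 / 2))).add
        (((hchain (deriv v2) hwd (3 / 2) (Real.cos (2 * π / 3)) 1).mul_const
          (Real.cos (2 * π / 3))).const_mul (1 / 2))
    rw [h.deriv]
    rw [harg 0, hc]; ring
  · -- mixed derivative
    have hg : (fun α1 => deriv (fun lam => Esym v2 v3 lam α1 (2 * π / 3)) 1)
        = fun α1 => 2 * deriv v2 1
          + 1 / 2 * (deriv v2 (3 / 2 + 1 * Real.cos α1) * Real.cos α1)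
          + 1 / 2 * (deriv v2 (3 / 2 + 1 * Real.cos (2 * π / 3)) * Real.cos (2 * π / 3)) := by
      funext α1; exact (hD1 α1 1).deriv
    rw [hg]
    -- differentiate in α1 at 2π/3
    have hinner : HasDerivAt (fun α : ℝ => (3 : ℝ) / 2 + 1 * Real.cos α)
        (1 * (-Real.sin (2 * π / 3))) (2 * π / 3) := by
      exact ((Real.hasDerivAt_cos (2 * π / 3)).const_mul 1).const_add (3 / 2)
    have hcomp : HasDerivAt (fun α : ℝ => deriv v2 (3 / 2 + 1 * Real.cos α))
        (deriv (deriv v2) (3 / 2 + 1 * Real.cos (2 * π / 3)) * (1 * (-Real.sin (2 * π / 3))))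
        (2 * π / 3) :=
      by have := (hwd (3 / 2 + 1 * Real.cos (2 * π / 3))).hasDerivAt.comp (2 * π / 3) hinner; exact this
    have h : HasDerivAt (fun α : ℝ => 2 * deriv v2 1
          + 1 / 2 * (deriv v2 (3 / 2 + 1 * Real.cos α) * Real.cos α)
          + 1 / 2 * (deriv v2 (3 / 2 + 1 * Real.cos (2 * π / 3)) * Real.cos (2 * π / 3)))
        (1 / 2 * (deriv (deriv v2) (3 / 2 + 1 * Real.cos (2 * π / 3)) * (1 * (-Real.sin (2 * π / 3))) * Real.cos (2 * π / 3)
          + deriv v2 (3 / 2 + 1 * Real.cos (2 * π / 3)) * (-Real.sin (2 * π / 3))))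
        (2 * π / 3) := by
      have hm := (hcomp.mul (Real.hasDerivAt_cos (2 * π / 3))).const_mul (1 / 2)
      have := (hm.const_add (2 * deriv v2 1)).add_const
        (1 / 2 * (deriv v2 (3 / 2 + 1 * Real.cos (2 * π / 3)) * Real.cos (2 * π / 3)))
      exact this
    rw [h.deriv, harg 0, hv2', hc, hs]; ring
end
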